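/- Let α ∈ (0,1), c, d ∈ [0,1], π = (α, 1−α)ᵀ, and let P be any 2×2 row-stochastic matrix with stationary distribution π. Set C = [[c, 1−c],[d, 1−d]] and define Q by diag(Cᵀπ) Q = Cᵀ diag(π) P C (assuming Cᵀπ has positive entries). Then the matrix X = [[x, 1−x],[y, 1−y]] with x = 2d − c + 2αc − 2αd and y = d + 2αc − 2αd also satisfies Xᵀ diag(π) P X = diag(Xᵀπ) Q, provided Xᵀπ has the needed positivity. -/

import Mathlib

set_option maxHeartbeats 1000000


open Matrix

theorem stmt_3 (α c d : ℝ) (hα : α ∈ Set.Ioo (0:ℝ) 1)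
    (hc : c ∈ Set.Icc (0:ℝ) 1) (hd : d ∈ Set.Icc (0:ℝ) 1)
    (P : Matrix (Fin 2) (Fin 2) ℝ)
    (hPnn : ∀ i j, 0 ≤ P i j) (hProw : ∀ i, ∑ j, P i j = 1)
    (hstat : Pᵀ *ᵥ ![α, 1 - α] = ![α, 1 - α])
    (Q : Matrix (Fin 2) (Fin 2) ℝ)
    (hCpos : ∀ i, 0 < ((!![c, 1 - c; d, 1 - d] : Matrix (Fin 2) (Fin 2) ℝ)ᵀ *ᵥ ![α, 1 - α]) i)
    (hQ : Matrix.diagonal ((!![c, 1 - c; d, 1 - d] : Matrix (Fin 2) (Fin 2) ℝ)ᵀ *ᵥ ![α, 1 - α]) * Q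
        = (!![c, 1 - c; d, 1 - d] : Matrix (Fin 2) (Fin 2) ℝ)ᵀ * Matrix.diagonal ![α, 1 - α] * P
            * !![c, 1 - c; d, 1 - d])
    (x y : ℝ) (hx : x = 2 * d - c + 2 * α * c - 2 * α * d) (hy : y = d + 2 * α * c - 2 * α * d)
    (hXpos : ∀ i, 0 < ((!![x, 1 - x; y, 1 - y] : Matrix (Fin 2) (Fin 2) ℝ)ᵀ *ᵥ ![α, 1 - α]) i) :
    (!![x, 1 - x; y, 1 - y] : Matrix (Fin 2) (Fin 2) ℝ)ᵀ * Matrix.diagonal ![α, 1 - α] * P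
        * !![x, 1 - x; y, 1 - y]
      = Matrix.diagonal ((!![x, 1 - x; y, 1 - y] : Matrix (Fin 2) (Fin 2) ℝ)ᵀ *ᵥ ![α, 1 - α]) * Q := by
  obtain ⟨hα0, hα1⟩ := hα
  have hα1' : (1 : ℝ) - α ≠ 0 := by linarith
  -- scalar facts about P
  have hr0 := hProw 0
  have hr1 := hProw 1
  simp [Fin.sum_univ_two] at hr0 hr1
  have hs0 := congrFun hstat 0
  simp [Matrix.mulVec, dotProduct, Fin.sum_univ_two] at hs0
  have e01 : P 0 1 = 1 - P 0 0 := by linarith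
  have e11 : P 1 1 = 1 - P 1 0 := by linarith
  have e10 : P 1 0 = α * (1 - P 0 0) / (1 - α) := by
    field_simp
    linarith
  -- the stationary vectors agree
  have hvec : ((!![x, 1 - x; y, 1 - y] : Matrix (Fin 2) (Fin 2) ℝ)ᵀ *ᵥ ![α, 1 - α])
      = ((!![c, 1 - c; d, 1 - d] : Matrix (Fin 2) (Fin 2) ℝ)ᵀ *ᵥ ![α, 1 - α]) := by
    funext i
    fin_cases i <;>
      simp [Matrix.mulVec, dotProduct, Fin.sum_univ_two, hx, hy] <;> ring
  have hmat : (!![x, 1 - x; y, 1 - y] : Matrix (Fin 2) (Fin 2) ℝ)ᵀ * Matrix.diagonal ![α, 1 - α] * P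
        * !![x, 1 - x; y, 1 - y]
      = (!![c, 1 - c; d, 1 - d] : Matrix (Fin 2) (Fin 2) ℝ)ᵀ * Matrix.diagonal ![α, 1 - α] * P
        * !![c, 1 - c; d, 1 - d] := by
    ext i j
    fin_cases i <;> fin_cases j <;>
      · simp only [Matrix.mul_apply, Matrix.transpose_apply, Fin.sum_univ_two,
          Matrix.diagonal_apply, Matrix.cons_val', Matrix.cons_val_zero, Matrix.cons_val_one,
          Matrix.head_cons, Matrix.empty_val', Matrix.cons_val_fin_one, Matrix.head_fin_const,
          Fin.isValue, Matrix.of_apply, if_true, if_false, one_ne_zero, zero_ne_one,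
          ite_true, ite_false, reduceIte, mul_zero, zero_mul, add_zero, zero_add,
          Fin.zero_eta, Fin.mk_one, hx, hy, e01, e11, e10]
        field_simp
        ring
  rw [hmat, hvec, hQ]
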